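/- Let Θ = {±e_j : j = 1,…,d} ⊂ ℝ^d (signed standard basis vectors), P0 the uniform distribution on {−1,1}^d, and for v ∈ Θ and δ ∈ [0,1], P_v the distribution on {−1,1}^d with p.m.f. p_v(x) = 2^{−d}(1 + δ v^T x). Then the complexity C₂({P_v}) := sup over f with E_{P0}[f(X)²] ≤ 1 of (1/|Θ|) Σ_{v∈Θ} (E_{P0}[f(X)] − E_{P_v}[f(X)])² satisfies C₂({P_v}) ≤ δ²/d. -/

import Mathlib

/-- The sign `±1` associated with a Boolean. -/
def sgn (b : Bool) : ℝ := if b then 1 else -1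

/-- Expectation under the uniform distribution `P₀` on `{-1,1}^d`. -/
noncomputable def expP0 {d : ℕ} (f : (Fin d → Bool) → ℝ) : ℝ :=
  ∑ x : Fin d → Bool, (2 : ℝ)⁻¹ ^ d * f x

/-- Expectation under the tilted distribution `P_v` with p.m.f.
`p_v(x) = 2^{-d}(1 + δ vᵀx)`, where `v = ±e_j` is encoded by `(j, b) ∈ Fin d × Bool`. -/
noncomputable def expPv {d : ℕ} (δ : ℝ) (v : Fin d × Bool) (f : (Fin d → Bool) → ℝ) : ℝ :=
  ∑ x : Fin d → Bool, ((2 : ℝ)⁻¹ ^ d * (1 + δ * (sgn v.2 * sgn (x v.1)))) * f x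

lemma sgn_sq (b : Bool) : sgn b * sgn b = 1 := by cases b <;> simp [sgn]

lemma sgn_not (b : Bool) : sgn (!b) = - sgn b := by cases b <;> simp [sgn]

/-- flipping coordinate j is a sum-preserving bijection -/
lemma flip_sum {d : ℕ} (j : Fin d) (F : (Fin d → Bool) → ℝ) :
    ∑ x : Fin d → Bool, F x = ∑ x : Fin d → Bool, F (Function.update x j (!x j)) := by
  have hinv : Function.Involutive
      (fun x : Fin d → Bool => Function.update x j (!x j)) := by
    intro x
    funext i
    by_cases h : i = j
    · subst h; simp [Function.update_self]
    · simp [Function.update_of_ne h]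
  apply Fintype.sum_bijective _ hinv.bijective
  intro x
  exact (congrArg F (hinv x)).symm

lemma orth {d : ℕ} {j k : Fin d} (h : j ≠ k) :
    ∑ x : Fin d → Bool, sgn (x j) * sgn (x k) = 0 := by
  have := flip_sum j (fun x => sgn (x j) * sgn (x k))
  have h2 : ∀ x : Fin d → Bool,
      sgn (Function.update x j (!x j) j) * sgn (Function.update x j (!x j) k)
        = -(sgn (x j) * sgn (x k)) := by
    intro x
    rw [Function.update_self, Function.update_of_ne (Ne.symm h), sgn_not]
    ring
  simp only [h2, Finset.sum_neg_distrib] at this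
  linarith

/-- Complexity bound for the 1-sparse mean estimation packing: with `Θ = {±e_j}_{j=1}^d`,
`P₀` uniform on `{-1,1}^d` and `p_v(x) = 2^{-d}(1 + δ vᵀx)`,
`C₂({P_v}) = sup_{E_{P₀}[f²] ≤ 1} (1/|Θ|) Σ_v (E_{P₀}[f] - E_{P_v}[f])² ≤ δ²/d`. -/
theorem statement16 (d : ℕ) (hd : 0 < d) (δ : ℝ) (hδ : δ ∈ Set.Icc (0 : ℝ) 1) :
    (⨆ f : {f : (Fin d → Bool) → ℝ // expP0 (fun x => (f x) ^ 2) ≤ 1},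
        (1 / (2 * (d : ℝ))) *
          ∑ v : Fin d × Bool, (expP0 f.1 - expPv δ v f.1) ^ 2) ≤
      δ ^ 2 / d := by
  have hne : Nonempty {f : (Fin d → Bool) → ℝ // expP0 (fun x => (f x) ^ 2) ≤ 1} :=
    ⟨⟨0, by simp [expP0]⟩⟩
  apply ciSup_le
  rintro ⟨f, hf⟩
  simp only
  set w : ℝ := (2 : ℝ)⁻¹ ^ d with hw
  have hwpos : 0 < w := by positivity
  -- coefficients
  set a : Fin d → ℝ := fun j => ∑ x : Fin d → Bool, w * f x * sgn (x j) with ha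
  -- step 1: value of each term
  have hdiff : ∀ v : Fin d × Bool,
      expP0 f - expPv δ v f = -(δ * sgn v.2 * a v.1) := by
    intro v
    have : expPv δ v f = expP0 f + δ * sgn v.2 * a v.1 := by
      unfold expPv expP0
      rw [ha]
      simp only [Finset.mul_sum]
      rw [← Finset.sum_add_distrib]
      apply Finset.sum_congr rfl
      intro x _
      ring
    rw [this]; ring
  have hsq : ∀ v : Fin d × Bool,
      (expP0 f - expPv δ v f) ^ 2 = δ ^ 2 * (a v.1) ^ 2 := by
    intro v
    rw [hdiff v]
    have := sgn_sq v.2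
    nlinarith [sgn_sq v.2]
  -- step 2: Bessel
  have hbessel : ∑ j : Fin d, (a j) ^ 2 ≤ 1 := by
    set V := EuclideanSpace ℝ (Fin d → Bool)
    set e : Fin d → V := fun j => WithLp.toLp 2 (fun x => Real.sqrt w * sgn (x j)) with he
    set u : V := WithLp.toLp 2 (fun x => Real.sqrt w * f x) with hu
    have hsw : Real.sqrt w * Real.sqrt w = w :=
      Real.mul_self_sqrt hwpos.le
    have hcard : (Finset.univ : Finset (Fin d → Bool)).card = 2 ^ d := by
      simp [Fintype.card_fun]
    have horth : Orthonormal ℝ e := by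
      rw [orthonormal_iff_ite]
      intro i j
      have : (inner ℝ (e i) (e j) : ℝ)
          = ∑ x : Fin d → Bool, w * (sgn (x i) * sgn (x j)) := by
        rw [PiLp.inner_apply]
        apply Finset.sum_congr rfl
        intro x _
        simp only [he, PiLp.toLp_apply, RCLike.inner_apply, starRingEnd_apply, star_trivial]
        linear_combination (sgn (x i) * sgn (x j)) * hsw
      rw [this]
      by_cases h : i = j
      · subst h
        simp only [sgn_sq, mul_one, Finset.sum_const, hcard, nsmul_eq_mul, if_pos rfl]
        rw [hw]
        field_simp
        rw [if_pos trivial]; push_cast; rw [← mul_pow]; norm_num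
      · rw [if_neg h, ← Finset.mul_sum, orth h, mul_zero]
    have hinner : ∀ j, (inner ℝ (e j) u : ℝ) = a j := by
      intro j
      rw [PiLp.inner_apply, ha]
      apply Finset.sum_congr rfl
      intro x _
      simp only [he, hu, PiLp.toLp_apply, RCLike.inner_apply, starRingEnd_apply, star_trivial]
      linear_combination (sgn (x j) * f x) * hsw
    have hnorm : ‖u‖ ^ 2 = expP0 fun x => (f x) ^ 2 := by
      rw [← real_inner_self_eq_norm_sq, PiLp.inner_apply]
      unfold expP0
      apply Finset.sum_congr rfl
      intro x _
      simp only [hu, PiLp.toLp_apply, RCLike.inner_apply, starRingEnd_apply, star_trivial]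
      linear_combination (f x * f x) * hsw
    have := horth.sum_inner_products_le (s := Finset.univ) u
    calc ∑ j : Fin d, (a j) ^ 2 = ∑ j : Fin d, ‖(inner ℝ (e j) u : ℝ)‖ ^ 2 := by
          apply Finset.sum_congr rfl
          intro j _
          rw [hinner j, Real.norm_eq_abs, sq_abs]
      _ ≤ ‖u‖ ^ 2 := this
      _ ≤ 1 := by rw [hnorm]; exact hf
  -- step 3: assemble
  have hsum : ∑ v : Fin d × Bool, (expP0 f - expPv δ v f) ^ 2
      = 2 * δ ^ 2 * ∑ j : Fin d, (a j) ^ 2 := by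
    rw [Fintype.sum_prod_type]
    simp only [hsq]
    rw [Finset.mul_sum]
    apply Finset.sum_congr rfl
    intro j _
    simp [Finset.sum_const]
    ring
  rw [hsum]
  have hd' : (0 : ℝ) < d := by exact_mod_cast hd
  calc 1 / (2 * (d : ℝ)) * (2 * δ ^ 2 * ∑ j : Fin d, (a j) ^ 2)
      = (δ ^ 2 / d) * ∑ j : Fin d, (a j) ^ 2 := by field_simp
    _ ≤ (δ ^ 2 / d) * 1 := by
        apply mul_le_mul_of_nonneg_left hbessel (by positivity)
    _ = δ ^ 2 / d := mul_one _
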